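/- Let a, b ∈ (0,1] satisfy a/(a+1) < b ≤ 4a/(4-a²) and b/(b+1) < a < 4b/(4-b²). Then the point x₂ = (ab + 2b - √(ab(ab+4)))/(2ab) is a 2-periodic point of f = f_{a,b}: f(x₂) ≠ x₂ and f(f(x₂)) = x₂. -/

import Mathlib

noncomputable def fab (a b x : ℝ) : ℝ :=
  if x ≤ 1/2 then x * (1 + a - a * x) else x * (1 - b + b * x)

theorem stmt13 (a b : ℝ) (ha : a ∈ Set.Ioc (0:ℝ) 1) (hb : b ∈ Set.Ioc (0:ℝ) 1)
    (h1 : a / (a + 1) < b) (h2 : b ≤ 4 * a / (4 - a^2))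
    (h3 : b / (b + 1) < a) (h4 : a < 4 * b / (4 - b^2)) :
    fab a b ((a * b + 2 * b - Real.sqrt (a * b * (a * b + 4))) / (2 * a * b)) ≠
      (a * b + 2 * b - Real.sqrt (a * b * (a * b + 4))) / (2 * a * b) ∧
    fab a b (fab a b ((a * b + 2 * b - Real.sqrt (a * b * (a * b + 4))) / (2 * a * b))) =
      (a * b + 2 * b - Real.sqrt (a * b * (a * b + 4))) / (2 * a * b) := by
  obtain ⟨ha0, ha1⟩ := ha
  obtain ⟨hb0, hb1⟩ := hb
  set s := Real.sqrt (a * b * (a * b + 4)) with hs_def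
  have hab : (0:ℝ) < a * b := mul_pos ha0 hb0
  have habn : (0:ℝ) ≤ a * b * (a * b + 4) := by nlinarith
  have hs2 : s ^ 2 = a * b * (a * b + 4) := Real.sq_sqrt habn
  have hs0 : 0 ≤ s := Real.sqrt_nonneg _
  have ha2 : (0:ℝ) < 4 - a ^ 2 := by nlinarith
  have hb2 : (0:ℝ) < 4 - b ^ 2 := by nlinarith
  -- from h2 : b * (4 - a^2) ≤ 4 * a
  have h2' : b * (4 - a ^ 2) ≤ 4 * a := by
    rw [le_div_iff₀ ha2] at h2; linarith
  have h4' : a * (4 - b ^ 2) < 4 * b := by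
    rw [lt_div_iff₀ hb2] at h4; linarith
  -- 2b ≤ s
  have hbs : 2 * b ≤ s := by nlinarith [sq_nonneg (s - 2 * b), sq_nonneg (s + 2 * b)]
  -- 2a < s
  have has : 2 * a < s := by nlinarith [sq_nonneg (s - 2 * a), sq_nonneg (s + 2 * a)]
  set x := (a * b + 2 * b - s) / (2 * a * b) with hx_def
  set y := (a * b - 2 * a + s) / (2 * a * b) with hy_def
  have hD : (2 * a * b) ≠ 0 := by positivity
  have hx_half : x ≤ 1 / 2 := by
    rw [hx_def, div_le_iff₀ (by positivity)]
    linarith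
  have hy_half : ¬ y ≤ 1 / 2 := by
    rw [hy_def, not_le, lt_div_iff₀ (by positivity)]
    linarith
  have key1 : x * (1 + a - a * x) = y := by
    rw [hx_def, hy_def]
    field_simp
    linear_combination (-1) * hs2
  have key2 : y * (1 - b + b * y) = x := by
    rw [hx_def, hy_def]
    field_simp
    linear_combination (1) * hs2
  have hfx : fab a b x = y := by
    rw [fab, if_pos hx_half, key1]
  constructor
  · rw [hfx]
    intro h
    rw [h] at hy_half
    exact hy_half hx_half
  · rw [hfx, fab, if_neg hy_half, key2]
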